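/- Over F_q with q odd, let λ, μ, θ ∈ F_q with λ(λ−μ) a nonzero square, say r² = λ(λ−μ), r ≠ 0. If (x, y) lies on the curve y² = θ·x(x−1)(x−λ)(x−μ)(x−λ(1−μ)/(1−λ)) and x ≠ λ, then the pair (t, s) with t = x + λ(x−μ)/(x−λ) and s = y·(x − (λ − r))/((x−λ)²) satisfies s² = θ·(t−μ)·(t − (1−λμ)/(1−λ))·(t − 2(λ − r)). -/

import Mathlib

theorem quotient_map_identity {K : Type*} [Field K] (h2 : (2 : K) ≠ 0)
    (lam mu theta r x y : K)
    (hlam0 : lam ≠ 0) (hlam1 : lam ≠ 1)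
    (hmu0 : mu ≠ 0) (hmu1 : mu ≠ 1) (hmulam : mu ≠ lam)
    (hth : theta ≠ 0) (hr0 : r ≠ 0) (hr : r ^ 2 = lam * (lam - mu))
    (hcurve : y ^ 2 =
      theta * x * (x - 1) * (x - lam) * (x - mu) * (x - lam * (1 - mu) / (1 - lam)))
    (hx : x ≠ lam) :
    (y * (x - (lam - r)) / ((x - lam) ^ 2)) ^ 2 =
      theta * ((x + lam * (x - mu) / (x - lam)) - mu) *
        ((x + lam * (x - mu) / (x - lam)) - (1 - lam * mu) / (1 - lam)) *
        ((x + lam * (x - mu) / (x - lam)) - 2 * (lam - r)) := by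
  have hxl : x - lam ≠ 0 := sub_ne_zero.mpr hx
  have h1l : (1:K) - lam ≠ 0 := sub_ne_zero.mpr (Ne.symm hlam1)
  field_simp at hcurve ⊢
  linear_combination ((x - (lam - r)) ^ 2) * hcurve +
    ((theta * x * (x - 1) * (x - lam) * (x - mu) *
      (x * (1 - lam) - lam * (1 - mu)))) * hr
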